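/- Variation-diminishing property for monotone sequences under stochastic kernels with the TP₂ (totally positive of order 2) property: if K : ℕ × ℕ → ℝ≥0 has all rows summing to 1, satisfies K(i,j)K(i',j') ≥ K(i,j')K(i',j) for all i ≤ i', j ≤ j', and u : ℕ → ℝ is a bounded nondecreasing sequence, then v_n = Σ_j K(n,j) u_j is nondecreasing in n. -/

import Mathlib

open ENNReal

/-- Tail sum of row `n` beyond `m`, in `ℝ≥0∞`. -/
private noncomputable def tp2Tail (K : ℕ → ℕ → ℝ) (n m : ℕ) : ℝ≥0∞ :=
  ∑' j, if m < j then ENNReal.ofReal (K n j) else 0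

private noncomputable def tp2Head (K : ℕ → ℕ → ℝ) (n m : ℕ) : ℝ≥0∞ :=
  ∑' j, if m < j then 0 else ENNReal.ofReal (K n j)

private lemma tp2_head_add_tail (K : ℕ → ℕ → ℝ)
    (hK_row : ∀ n, HasSum (fun j => K n j) 1) (hK_nonneg : ∀ i j, 0 ≤ K i j)
    (n m : ℕ) : tp2Tail K n m + tp2Head K n m = 1 := by
  rw [tp2Tail, tp2Head, ← ENNReal.tsum_add]
  have : ∀ j, ((if m < j then ENNReal.ofReal (K n j) else 0)
      + (if m < j then 0 else ENNReal.ofReal (K n j))) = ENNReal.ofReal (K n j) := by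
    intro j; by_cases h : m < j <;> simp [h]
  rw [tsum_congr this, ← ENNReal.ofReal_tsum_of_nonneg (hK_nonneg n) (hK_row n).summable,
    (hK_row n).tsum_eq, ENNReal.ofReal_one]

/-- Stochastic dominance from TP₂. -/
private lemma tp2_tail_mono (K : ℕ → ℕ → ℝ)
    (hK_nonneg : ∀ i j, 0 ≤ K i j)
    (hK_row : ∀ n, HasSum (fun j => K n j) 1)
    (hTP2 : ∀ i i' j j' : ℕ, i ≤ i' → j ≤ j' →
      K i j' * K i' j ≤ K i j * K i' j')
    {i i' : ℕ} (h : i ≤ i') (m : ℕ) : tp2Tail K i m ≤ tp2Tail K i' m := by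
  have cross : tp2Tail K i m * tp2Head K i' m ≤ tp2Head K i m * tp2Tail K i' m := by
    rw [tp2Tail, ← ENNReal.tsum_mul_right]
    rw [show tp2Head K i m * tp2Tail K i' m = tp2Tail K i' m * tp2Head K i m by ring]
    rw [tp2Tail, ← ENNReal.tsum_mul_right]
    refine ENNReal.tsum_le_tsum fun j => ?_
    simp only [tp2Head]
    rw [← ENNReal.tsum_mul_left, ← ENNReal.tsum_mul_left]
    refine ENNReal.tsum_le_tsum fun j' => ?_
    by_cases hj : m < j
    · by_cases hj' : m < j'
      · simp [hj, hj']
      · simp only [hj, hj', if_true, if_false]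
        rw [← ENNReal.ofReal_mul (hK_nonneg i j), ← ENNReal.ofReal_mul (hK_nonneg i' j)]
        apply ENNReal.ofReal_le_ofReal
        have := hTP2 i i' j' j h (le_trans (not_lt.mp hj') (le_of_lt hj))
        linarith [this]
    · simp [hj]
  have h1 := tp2_head_add_tail K hK_row hK_nonneg i m
  have h2 := tp2_head_add_tail K hK_row hK_nonneg i' m
  calc tp2Tail K i m = tp2Tail K i m * (tp2Tail K i' m + tp2Head K i' m) := by
        rw [h2, mul_one]
    _ = tp2Tail K i m * tp2Tail K i' m + tp2Tail K i m * tp2Head K i' m := by ring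
    _ ≤ tp2Tail K i m * tp2Tail K i' m + tp2Head K i m * tp2Tail K i' m := by
        exact add_le_add_right cross _
    _ = (tp2Tail K i m + tp2Head K i m) * tp2Tail K i' m := by ring
    _ = tp2Tail K i' m := by rw [h1, one_mul]

/-- Abel-summation identity in `ℝ≥0∞`. -/
private lemma tp2_abel (K : ℕ → ℕ → ℝ) (hK_nonneg : ∀ i j, 0 ≤ K i j)
    (u : ℕ → ℝ) (hu_mono : Monotone u)
    (n : ℕ) (hs : Summable (fun j => K n j * (u j - u 0))) :
    ENNReal.ofReal (∑' j, K n j * (u j - u 0))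
      = ∑' m, ENNReal.ofReal (u (m + 1) - u m) * tp2Tail K n m := by
  have hnn : ∀ j, 0 ≤ K n j * (u j - u 0) := fun j =>
    mul_nonneg (hK_nonneg n j) (sub_nonneg.mpr (hu_mono (Nat.zero_le j)))
  rw [ENNReal.ofReal_tsum_of_nonneg hnn hs]
  have step : ∀ j, ENNReal.ofReal (K n j * (u j - u 0))
      = ∑' m, if m < j then ENNReal.ofReal (u (m + 1) - u m) * ENNReal.ofReal (K n j) else 0 := by
    intro j
    rw [ENNReal.ofReal_mul (hK_nonneg n j), ← Finset.sum_range_sub u j,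
      ENNReal.ofReal_sum_of_nonneg (fun m _ => sub_nonneg.mpr (hu_mono (Nat.le_succ m))),
      Finset.mul_sum]
    rw [tsum_eq_sum (s := Finset.range j) (by intro m hm; simp [Finset.mem_range.not.mp hm])]
    refine Finset.sum_congr rfl fun m hm => ?_
    rw [if_pos (Finset.mem_range.mp hm), mul_comm]
  rw [tsum_congr step, ENNReal.tsum_comm]
  refine tsum_congr fun m => ?_
  rw [tp2Tail, ← ENNReal.tsum_mul_left]
  refine tsum_congr fun j => ?_
  by_cases h : m < j <;> simp [h]

theorem tp2_kernel_preserves_monotone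
    (K : ℕ → ℕ → ℝ)
    (hK_nonneg : ∀ i j, 0 ≤ K i j)
    (hK_row : ∀ n, HasSum (fun j => K n j) 1)
    (hTP2 : ∀ i i' j j' : ℕ, i ≤ i' → j ≤ j' →
      K i j' * K i' j ≤ K i j * K i' j')
    (u : ℕ → ℝ) (M : ℝ) (hu_bdd : ∀ j, |u j| ≤ M) (hu_mono : Monotone u)
    (hsum : ∀ n, Summable (fun j => K n j * u j)) :
    Monotone (fun n => ∑' j : ℕ, K n j * u j) := by
  have hs : ∀ n, Summable (fun j => K n j * (u j - u 0)) := by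
    intro n
    have := (hsum n).sub ((hK_row n).summable.mul_right (u 0))
    exact this.congr fun j => by ring
  have hsplit : ∀ n, ∑' j, K n j * u j = (∑' j, K n j * (u j - u 0)) + u 0 := by
    intro n
    have : ∀ j, K n j * u j = K n j * (u j - u 0) + K n j * u 0 := fun j => by ring
    rw [tsum_congr this, Summable.tsum_add (hs n) ((hK_row n).summable.mul_right (u 0)),
      ((hK_row n).mul_right (u 0)).tsum_eq, one_mul]
  intro i i' h
  simp only
  rw [hsplit i, hsplit i']
  refine add_le_add_left ?_ _
  have hnn : 0 ≤ ∑' j, K i' j * (u j - u 0) := tsum_nonneg fun j =>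
    mul_nonneg (hK_nonneg i' j) (sub_nonneg.mpr (hu_mono (Nat.zero_le j)))
  refine (ENNReal.ofReal_le_ofReal_iff hnn).mp ?_
  rw [tp2_abel K hK_nonneg u hu_mono i (hs i), tp2_abel K hK_nonneg u hu_mono i' (hs i')]
  exact ENNReal.tsum_le_tsum fun m =>
    mul_le_mul_right (tp2_tail_mono K hK_nonneg hK_row hTP2 h m) _
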